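/- arXiv:2310.12068 — 3 statements merged into one kernel-verified Lean document; each statement's English description precedes it below -/
import Mathlib

section
/- For a pathwise embedding between synchronization trees of height at most k, being an injective map is equivalent to being an embedding (i.e., additionally reflecting both the unary predicates and the accessibility relation). -/
/-- A (pointed) Kripke model over a set `V` of propositional variables. -/
structure Kripke (V : Type) where
  World : Type
  R : World → World → Prop
  val : V → World → Prop
  pt : World

/-- A homomorphism of Kripke models. -/
structure KHom {V : Type} (A B : Kripke V) where
  toFun : A.World → B.World
  map_rel : ∀ x y, A.R x y → B.R (toFun x) (toFun y)
  map_val : ∀ p x, A.val p x → B.val p (toFun x)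
  map_pt : toFun A.pt = B.pt

namespace KHom

variable {V : Type} {A B C : Kripke V}

/-- Composition of homomorphisms of Kripke models. -/
def comp (g : KHom B C) (f : KHom A B) : KHom A C where
  toFun := g.toFun ∘ f.toFun
  map_rel := fun x y h => g.map_rel _ _ (f.map_rel _ _ h)
  map_val := fun p x h => g.map_val _ _ (f.map_val _ _ h)
  map_pt := by simp [f.map_pt, g.map_pt]

/-- A pathwise embedding: a homomorphism reflecting the unary predicates. -/
def Pathwise (f : KHom A B) : Prop :=
  ∀ p x, B.val p (f.toFun x) → A.val p x

/-- An embedding: an injective homomorphism reflecting the unary predicates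
and the accessibility relation. -/
def IsEmbedding (f : KHom A B) : Prop :=
  Function.Injective f.toFun ∧ f.Pathwise ∧
    ∀ x y, B.R (f.toFun x) (f.toFun y) → A.R x y

/-- A p-morphism: a pathwise embedding satisfying the back condition. -/
def IsPMorphism (f : KHom A B) : Prop :=
  f.Pathwise ∧ ∀ x y, B.R (f.toFun x) y → ∃ x', A.R x x' ∧ f.toFun x' = y

end KHom

/-- `IsPath A l x` : `l` is a finite R-path from the distinguished element of `A` to `x`. -/
def IsPath {V : Type} (A : Kripke V) (l : List A.World) (x : A.World) : Prop :=
  l.head? = some A.pt ∧ l.getLast? = some x ∧ l.Chain' A.R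

/-- A synchronization tree: every element is reachable from the distinguished
element by a unique finite path along the accessibility relation. -/
def IsSyncTree {V : Type} (A : Kripke V) : Prop :=
  ∀ x, ∃! l, IsPath A l x

/-- Height at most `k`: every path from the root makes at most `k` steps
(i.e. has at most `k+1` elements). -/
def HeightLE {V : Type} (A : Kripke V) (k : ℕ∞) : Prop :=
  ∀ l x, IsPath A l x → (l.length : ℕ∞) ≤ k + 1

/-- A path model: the elements form a finite R-chain starting at the
distinguished element, with no other R-edges. -/
def IsPathModel {V : Type} (A : Kripke V) : Prop :=
  ∃ l : List A.World, l ≠ [] ∧ l.Nodup ∧ l.head? = some A.pt ∧ (∀ x, x ∈ l) ∧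
    ∀ x y, A.R x y ↔ ∃ i, l[i]? = some x ∧ l[i + 1]? = some y

/-- Modal formulas. -/
inductive MF (V : Type) where
  | top | bot
  | var (p : V)
  | neg (φ : MF V)
  | and (φ ψ : MF V)
  | or (φ ψ : MF V)
  | box (φ : MF V)
  | dia (φ : MF V)

/-- Kripke semantics of modal formulas. -/
def Sat {V : Type} (A : Kripke V) (w : A.World) : MF V → Prop
  | .top => True
  | .bot => False
  | .var p => A.val p w
  | .neg φ => ¬ Sat A w φ
  | .and φ ψ => Sat A w φ ∧ Sat A w ψ
  | .or φ ψ => Sat A w φ ∨ Sat A w ψ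
  | .box φ => ∀ x, A.R w x → Sat A x φ
  | .dia φ => ∃ x, A.R w x ∧ Sat A x φ

/-- Modal depth: the maximal nesting of modalities. -/
def MF.depth {V : Type} : MF V → ℕ
  | .top => 0
  | .bot => 0
  | .var _ => 0
  | .neg φ => φ.depth
  | .and φ ψ => max φ.depth ψ.depth
  | .or φ ψ => max φ.depth ψ.depth
  | .box φ => φ.depth + 1
  | .dia φ => φ.depth + 1

/-- Existential modal formulas: no `□`, negations only on propositional variables. -/
inductive MF.IsExistential {V : Type} : MF V → Prop
  | top : MF.IsExistential .top
  | bot : MF.IsExistential .bot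
  | var (p : V) : MF.IsExistential (.var p)
  | negvar (p : V) : MF.IsExistential (.neg (.var p))
  | and {φ ψ} : MF.IsExistential φ → MF.IsExistential ψ → MF.IsExistential (.and φ ψ)
  | or {φ ψ} : MF.IsExistential φ → MF.IsExistential ψ → MF.IsExistential (.or φ ψ)
  | dia {φ} : MF.IsExistential φ → MF.IsExistential (.dia φ)

/-- The tree unravelling of a Kripke model to depth `k`. -/
def Unravel {V : Type} (A : Kripke V) (k : ℕ∞) : Kripke V where
  World := { l : List A.World // l ≠ [] ∧ l.head? = some A.pt ∧ l.Chain' A.R ∧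
    (l.length : ℕ∞) ≤ k + 1 }
  R s t := ∃ x, t.val = s.val ++ [x]
  val p s := ∃ x, s.val.getLast? = some x ∧ A.val p x
  pt := ⟨[A.pt], by simp, by simp, List.isChain_singleton _, by simp⟩

/-- The projection from the unravelling, sending a sequence to its last element. -/
def projFun {V : Type} (A : Kripke V) (k : ℕ∞) : (Unravel A k).World → A.World :=
  fun s => s.val.getLast s.prop.1

theorem IsPath.map {V : Type} {A B : Kripke V} (f : KHom A B) {l : List A.World} {x : A.World}
    (h : IsPath A l x) : IsPath B (l.map f.toFun) (f.toFun x) := by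
  obtain ⟨h1, h2, h3⟩ := h
  refine ⟨?_, ?_, List.isChain_map_of_isChain _ f.map_rel h3⟩
  · rw [List.head?_map, h1, Option.map_some, f.map_pt]
  · rw [List.getLast?_map, h2, Option.map_some]

theorem IsPath.concat {V : Type} {B : Kripke V} {l : List B.World} {b c : B.World}
    (h : IsPath B l b) (hR : B.R b c) : IsPath B (l ++ [c]) c := by
  obtain ⟨h1, h2, h3⟩ := h
  refine ⟨?_, by simp, ?_⟩
  · rw [List.head?_append, h1]; rfl
  · unfold List.Chain'; rw [List.isChain_append]
    refine ⟨h3, by simp, ?_⟩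
    intro x hx y hy
    simp at hy
    rw [h2] at hx; simp at hx
    subst hx; subst hy; exact hR

/-- For a pathwise embedding between synchronization trees of height
at most `k`, being injective is equivalent to being an embedding. -/
theorem stmt2 {V : Type} (k : ℕ∞) (A B : Kripke V)
    (hA : IsSyncTree A) (hAk : HeightLE A k) (hB : IsSyncTree B) (hBk : HeightLE B k)
    (f : KHom A B) (hf : f.Pathwise) :
    Function.Injective f.toFun ↔ f.IsEmbedding := by
  constructor
  · intro hinj
    refine ⟨hinj, hf, ?_⟩
    intro x y hR
    obtain ⟨lx, hlx, _⟩ := hA x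
    obtain ⟨ly, hly, _⟩ := hA y
    obtain ⟨m, _, hum⟩ := hB (f.toFun y)
    have h1 : ly.map f.toFun = m := hum _ (IsPath.map f hly)
    have h2 : lx.map f.toFun ++ [f.toFun y] = m :=
      hum _ (IsPath.concat (IsPath.map f hlx) hR)
    have h3 : ly = lx ++ [y] := by
      apply List.map_injective_iff.mpr hinj
      rw [h1, List.map_append, List.map_singleton, h2]
    obtain ⟨-, hlast, hchain⟩ := hly
    rw [h3] at hchain; unfold List.Chain' at hchain; rw [List.isChain_append] at hchain
    obtain ⟨-, -, hc⟩ := hchain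
    have := hc x ?_ y (by simp)
    · exact this
    · obtain ⟨-, hx, -⟩ := hlx
      simpa [hx] using rfl
  · intro h; exact h.1
end

section
/- The tree unravelling functor R_k : K → T_k is right adjoint to the inclusion of the category T_k of synchronization trees of height at most k into the category K of Kripke models; in particular T_k is a coreflective subcategory of K. -/
lemma KHom.ext' {V : Type} {A B : Kripke V} {f g : KHom A B}
    (h : f.toFun = g.toFun) : f = g := by
  cases f; cases g; simp_all

lemma head?_append_left {α : Type*} (l m : List α) (h : l ≠ []) :
    (l ++ m).head? = l.head? := by
  cases l with
  | nil => simp at h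
  | cons b t => simp

lemma isPath_ne_nil {V : Type} {A : Kripke V} {l : List A.World} {x : A.World}
    (h : IsPath A l x) : l ≠ [] := by
  intro hn; rw [hn] at h; simp [IsPath] at h

lemma isPath_getLast {V : Type} {A : Kripke V} {l : List A.World} {x : A.World}
    (h : IsPath A l x) : l.getLast (isPath_ne_nil h) = x := by
  have := h.2.1
  rw [List.getLast?_eq_getLast (isPath_ne_nil h)] at this
  exact Option.some.inj this

lemma isPath_step {V : Type} {A : Kripke V} {l : List A.World} {x y : A.World}
    (h : IsPath A l x) (hr : A.R x y) : IsPath A (l ++ [y]) y := by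
  refine ⟨?_, ?_, ?_⟩
  · rw [head?_append_left l [y] (isPath_ne_nil h)]; exact h.1
  · exact List.getLast?_concat
  · refine List.isChain_append.2 ?_
    refine ⟨h.2.2, List.isChain_singleton y, ?_⟩
    intro a ha b hb
    simp only [List.head?_cons, Option.mem_def, Option.some.injEq] at hb
    rw [Option.mem_def, h.2.1, Option.some.injEq] at ha
    rw [← ha, ← hb]; exact hr

theorem stmt3' {V : Type} (k : ℕ∞) (A : Kripke V) :
    ∃ p : KHom (Unravel A k) A, p.toFun = projFun A k ∧
      ∀ T : Kripke V, IsSyncTree T → HeightLE T k →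
        ∀ g : KHom T A, ∃! h : KHom T (Unravel A k), p.comp h = g := by
  classical
  have lastval : ∀ s : (Unravel A k).World, s.val.getLast? = some (projFun A k s) :=
    fun s => List.getLast?_eq_getLast s.prop.1
  refine ⟨⟨projFun A k, ?_, ?_, ?_⟩, rfl, ?_⟩
  · -- map_rel
    rintro s t ⟨x, hx⟩
    have hproj : projFun A k t = x := by
      have := lastval t
      rw [hx, List.getLast?_concat] at this
      exact (Option.some.inj this).symm
    have hch := t.prop.2.2.1
    rw [hx] at hch; replace hch := List.isChain_append.1 hch
    have := hch.2.2 (projFun A k s) (lastval s) x rfl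
    rwa [hproj]
  · -- map_val
    rintro q s ⟨x, hx, hval⟩
    have : x = projFun A k s := by
      have := lastval s; rw [hx] at this; exact Option.some.inj this
    rwa [this] at hval
  · -- map_pt
    rfl
  · intro T hT hH g
    set path : T.World → List T.World := fun x => (hT x).choose with hpathdef
    have hpath : ∀ x, IsPath T (path x) x := fun x => (hT x).choose_spec.1
    have huniq : ∀ x l, IsPath T l x → l = path x := fun x l h => (hT x).choose_spec.2 l h
    have pathRoot : path T.pt = [T.pt] :=
      (huniq T.pt [T.pt] ⟨rfl, rfl, List.isChain_singleton _⟩).symm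
    have pathStep : ∀ x y, T.R x y → path y = path x ++ [y] := fun x y hr =>
      (huniq y _ (isPath_step (hpath x) hr)).symm
    have memU : ∀ x : T.World, (path x).map g.toFun ≠ [] ∧
        ((path x).map g.toFun).head? = some A.pt ∧
        ((path x).map g.toFun).Chain' A.R ∧
        ((((path x).map g.toFun).length : ℕ∞)) ≤ k + 1 := by
      intro x
      refine ⟨by simp [isPath_ne_nil (hpath x)], ?_, ?_, ?_⟩
      · rw [List.head?_map, (hpath x).1]
        simp [g.map_pt]
      · exact (List.isChain_map _).2 ((hpath x).2.2.imp (fun a b => g.map_rel a b))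
      · rw [List.length_map]
        exact hH _ _ (hpath x)
    set hF : T.World → (Unravel A k).World := fun x => ⟨(path x).map g.toFun, memU x⟩
      with hFdef
    have hlast : ∀ x, ((path x).map g.toFun).getLast? = some (g.toFun x) := by
      intro x
      rw [List.getLast?_map, (hpath x).2.1]; rfl
    have hproj : ∀ x, projFun A k (hF x) = g.toFun x := by
      intro x
      have := lastval (hF x)
      rw [show (hF x).val = (path x).map g.toFun from rfl, hlast x] at this
      exact (Option.some.inj this).symm
    refine ⟨⟨hF, ?_, ?_, ?_⟩, ?_, ?_⟩
    · -- map_rel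
      intro x y hr
      refine ⟨g.toFun y, ?_⟩
      show (path y).map g.toFun = (path x).map g.toFun ++ [g.toFun y]
      rw [pathStep x y hr, List.map_append]; rfl
    · -- map_val
      intro q x hv
      exact ⟨g.toFun x, hlast x, g.map_val q x hv⟩
    · -- map_pt
      apply Subtype.ext
      show (path T.pt).map g.toFun = [A.pt]
      rw [pathRoot]; simp [g.map_pt]
    · -- comp = g
      apply KHom.ext'
      funext x
      exact hproj x
    · -- uniqueness
      intro h' hcomp
      have hproj' : ∀ x, projFun A k (h'.toFun x) = g.toFun x := by
        intro x
        have := congrArg (fun f => f.toFun x) hcomp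
        exact this
      have key : ∀ l x, IsPath T l x → (h'.toFun x).val = l.map g.toFun := by
        intro l
        induction l using List.reverseRecOn with
        | nil => intro x h; exact absurd rfl (isPath_ne_nil h)
        | append_singleton l a ih =>
          intro x h
          have hxa : x = a := by
            have := h.2.1; rw [List.getLast?_concat] at this
            exact (Option.some.inj this).symm
          subst hxa
          by_cases hl : l = []
          · subst hl
            have hxpt : x = T.pt := by
              have := h.1; simp at this; exact this
            subst hxpt
            have := h'.map_pt
            rw [this]; simp [Unravel, g.map_pt]
          · set x' := l.getLast hl with hx'
            have hch := h.2.2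
            replace hch := List.isChain_append.1 hch
            have hpx' : IsPath T l x' := by
              refine ⟨?_, List.getLast?_eq_getLast hl, hch.1⟩
              · rw [← head?_append_left l [x] hl]; exact h.1
            have hrx : T.R x' x := by
              have := hch.2.2 x' (List.getLast?_eq_getLast hl) x rfl
              exact this
            obtain ⟨b, hb⟩ := h'.map_rel x' x hrx
            have hbx : b = g.toFun x := by
              have := lastval (h'.toFun x)
              rw [hb, List.getLast?_concat, hproj' x] at this
              exact Option.some.inj this
            rw [hb, ih x' hpx', hbx, List.map_append]; rfl
      apply KHom.ext'
      funext x
      apply Subtype.ext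
      rw [key (path x) x (hpath x)]

/-- The tree unravelling functor `R_k` is right adjoint to the inclusion
of synchronization trees of height at most `k` into Kripke models: the projection
`R_k A → A` is a homomorphism, and composition with it gives a bijection between
homomorphisms `T → R_k A` and homomorphisms `T → A`, for every synchronization tree
`T` of height at most `k` (i.e. `T_k` is coreflective in `K`). -/
theorem stmt3 {V : Type} (k : ℕ∞) (A : Kripke V) :
    ∃ p : KHom (Unravel A k) A, p.toFun = projFun A k ∧
      ∀ T : Kripke V, IsSyncTree T → HeightLE T k →
        ∀ g : KHom T A, ∃! h : KHom T (Unravel A k), p.comp h = g := stmt3' k A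
end

section
/- A subpresheaf of a representable presheaf over the forest poset P_k is representable or empty, and representable presheaves over P_k have no non-trivial quotients; consequently the set of all maps between representable presheaves generates the class of monomorphisms of the presheaf category over P_k. -/
open CategoryTheory

/-- Over a forest poset, every subpresheaf of a representable presheaf
is empty or representable, and representable presheaves have no non-trivial quotients
(every epimorphism between representables is an isomorphism). -/
theorem stmt19 (P : Type) [PartialOrder P]
    (hforest : ∀ p : P, {q : P | q ≤ p}.Finite ∧ IsChain (· ≤ ·) {q : P | q ≤ p}) :
    (∀ (p : P) (G : Pᵒᵖ ⥤ Type) (i : G ⟶ yoneda.obj p), Mono i →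
      (∀ q : Pᵒᵖ, IsEmpty (G.obj q)) ∨ ∃ q : P, Nonempty (G ≅ yoneda.obj q)) ∧
    (∀ (p q : P) (e : yoneda.obj p ⟶ yoneda.obj q), Epi e → IsIso e) := by
  have hsy : ∀ (a : P) (r : Pᵒᵖ), Subsingleton ((yoneda.obj a).obj r) := by
    intro a r
    dsimp
    infer_instance
  constructor
  · intro p G i hi
    rw [NatTrans.mono_iff_mono_app] at hi
    -- each G.obj is a subsingleton
    have hsub : ∀ r : Pᵒᵖ, Subsingleton (G.obj r) := by
      intro r
      constructor
      intro a b
      have := hi r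
      rw [mono_iff_injective] at this
      exact this (Subsingleton.elim _ _)
    -- nonempty implies ≤ p
    have hle : ∀ r : Pᵒᵖ, G.obj r → r.unop ≤ p := fun r x => (i.app r x).le
    by_cases hne : ∀ q : Pᵒᵖ, IsEmpty (G.obj q)
    · exact Or.inl hne
    · right
      push_neg at hne
      obtain ⟨r₀, hr₀⟩ := hne
      have hr₀ : Nonempty (G.obj r₀) := hr₀
      set S : Set P := {q : P | q ≤ p ∧ Nonempty (G.obj (Opposite.op q))} with hS
      have hSfin : S.Finite := (hforest p).1.subset (fun q hq => hq.1)
      have hSne : S.Nonempty := ⟨r₀.unop, hle r₀ hr₀.some, ⟨hr₀.some⟩⟩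
      obtain ⟨q₀, hq₀S, hq₀max⟩ := (by obtain ⟨q, hq, hm⟩ := hSfin.exists_maximal hSne; exact ⟨q, hq, fun x hx h => le_antisymm h (hm hx h)⟩ : ∃ q ∈ S, ∀ x ∈ S, id q ≤ id x → id q = id x)
      have hmax : ∀ x ∈ S, x ≤ q₀ := by
        intro x hx
        rcases eq_or_ne x q₀ with h | h
        · exact h.le
        · rcases (hforest p).2 hx.1 hq₀S.1 h with h' | h'
          · exact h'
          · exact (hq₀max x hx h').ge
      -- G.obj (op r) nonempty iff r ≤ q₀
      have hfwd : ∀ r : Pᵒᵖ, G.obj r → r.unop ≤ q₀ := by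
        intro r x
        exact hmax r.unop ⟨hle r x, ⟨x⟩⟩
      obtain ⟨x₀⟩ := hq₀S.2
      have hbwd : ∀ r : Pᵒᵖ, r.unop ≤ q₀ → G.obj r := by
        intro r h
        exact G.map (homOfLE h).op x₀
      refine ⟨q₀, ⟨NatIso.ofComponents (fun r =>
        Equiv.toIso (@equivOfSubsingletonOfSubsingleton _ _ (hsub r) (hsy q₀ r)
          (fun x => (homOfLE (hfwd r x)) : G.obj r → ((yoneda.obj q₀).obj r))
          (fun f => hbwd r f.le))) ?_⟩⟩
      intro r s f
      ext x
      exact @Subsingleton.elim _ (hsy q₀ s) _ _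
  · intro p q e he
    rw [NatTrans.epi_iff_epi_app] at he
    have hq : q ≤ p := by
      have := he (Opposite.op q)
      rw [epi_iff_surjective] at this
      obtain ⟨f, -⟩ := this (𝟙 q : q ⟶ q)
      exact f.le
    rw [NatTrans.isIso_iff_isIso_app]
    intro r
    rw [isIso_iff_bijective]
    constructor
    · intro a b _
      exact @Subsingleton.elim _ (hsy p r) a b
    · intro f
      exact ⟨homOfLE (f.le.trans hq), @Subsingleton.elim _ (hsy q r) _ _⟩
end
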